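/- Let $m \ge 0$ and define $c_n = \sqrt{\frac{(n+2m)(n+2m+1)}{(2n+2m-1)(2n+2m+1)}}$ and $d_n = -\sqrt{\frac{n(n+1)}{(2n+2m+1)(2n+2m+3)}}$ for $n \ge 1$. Then $c_1^2 = a_1$, $c_2^2 = a_2$, $d_n = b_n/c_n$ for all $n \ge 1$, and $c_n^2 + d_{n-2}^2 = a_n$ for all $n \ge 3$, where $a_n = \frac{2(n^2+2mn+2m^2-n-m-1)}{(2n+2m-3)(2n+2m+1)}$ and $b_n = -\sqrt{\frac{n(n+1)(n+2m)(n+2m+1)}{(2n+2m-1)(2n+2m+1)^2(2n+2m+3)}}$. Consequently, the upper bidiagonal (stride-2) matrix $\mathcal R$ with diagonal $c_n$ and second superdiagonal $d_n$ is the Cholesky factor of $\mathcal M$: $\mathcal R^\top \mathcal R = \mathcal M$. -/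

import Mathlib

/-- Diagonal entries of the multiplication-by-`(1-x²)` operator. -/
noncomputable def aM (m n : ℕ) : ℝ :=
  2 * ((n : ℝ) ^ 2 + 2 * m * n + 2 * (m : ℝ) ^ 2 - n - m - 1) /
    ((2 * (n : ℝ) + 2 * m - 3) * (2 * (n : ℝ) + 2 * m + 1))

/-- Second off-diagonal entries of the multiplication-by-`(1-x²)` operator. -/
noncomputable def bM (m n : ℕ) : ℝ :=
  -Real.sqrt ((n : ℝ) * ((n : ℝ) + 1) * ((n : ℝ) + 2 * m) * ((n : ℝ) + 2 * m + 1) /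
    ((2 * (n : ℝ) + 2 * m - 1) * (2 * (n : ℝ) + 2 * m + 1) ^ 2 * (2 * (n : ℝ) + 2 * m + 3)))

/-- Diagonal entries of the Cholesky factor `R`. -/
noncomputable def cC (m n : ℕ) : ℝ :=
  Real.sqrt (((n : ℝ) + 2 * m) * ((n : ℝ) + 2 * m + 1) /
    ((2 * (n : ℝ) + 2 * m - 1) * (2 * (n : ℝ) + 2 * m + 1)))

/-- Second superdiagonal entries of the Cholesky factor `R`. -/
noncomputable def dC (m n : ℕ) : ℝ :=
  -Real.sqrt ((n : ℝ) * ((n : ℝ) + 1) /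
    ((2 * (n : ℝ) + 2 * m + 1) * (2 * (n : ℝ) + 2 * m + 3)))

/-- The upper (stride-2) bidiagonal matrix `R` (indexed from `1`). -/
noncomputable def Rchol (m : ℕ) (i j : ℕ) : ℝ :=
  if 1 ≤ i then (if j = i then cC m i else if j = i + 2 then dC m i else 0) else 0

/-- The symmetric pentadiagonal matrix `M` (indexed from `1`). -/
noncomputable def Mpenta (m : ℕ) (i j : ℕ) : ℝ :=
  if 1 ≤ i ∧ 1 ≤ j then
    (if i = j then aM m i else if j = i + 2 then bM m i
     else if i = j + 2 then bM m j else 0)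
  else 0

lemma cC_sq (m n : ℕ) (hn : 1 ≤ n) :
    (cC m n) ^ 2 = ((n : ℝ) + 2 * m) * ((n : ℝ) + 2 * m + 1) /
      ((2 * (n : ℝ) + 2 * m - 1) * (2 * (n : ℝ) + 2 * m + 1)) := by
  have hn' : (1:ℝ) ≤ (n:ℝ) := by exact_mod_cast hn
  have hm : (0:ℝ) ≤ (m:ℝ) := Nat.cast_nonneg m
  apply Real.sq_sqrt
  apply div_nonneg
  · nlinarith
  · nlinarith

lemma cC_pos (m n : ℕ) (hn : 1 ≤ n) : 0 < cC m n := by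
  have hn' : (1:ℝ) ≤ (n:ℝ) := by exact_mod_cast hn
  have hm : (0:ℝ) ≤ (m:ℝ) := Nat.cast_nonneg m
  apply Real.sqrt_pos.mpr
  apply div_pos
  · nlinarith
  · nlinarith

lemma dC_sq (m n : ℕ) :
    (dC m n) ^ 2 = (n : ℝ) * ((n : ℝ) + 1) /
      ((2 * (n : ℝ) + 2 * m + 1) * (2 * (n : ℝ) + 2 * m + 3)) := by
  rw [dC, neg_sq, Real.sq_sqrt (by positivity)]

lemma two_m_sub_ne (m : ℕ) : (2 * (m:ℝ) - 1) ≠ 0 := by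
  have : ((2 * m : ℕ) : ℝ) ≠ ((1:ℕ):ℝ) := by
    exact_mod_cast (by omega : (2 * m : ℕ) ≠ 1)
  push_cast at this
  intro h
  apply this
  linarith

lemma dC_eq (m n : ℕ) (hn : 1 ≤ n) : dC m n = bM m n / cC m n := by
  have hn' : (1:ℝ) ≤ (n:ℝ) := by exact_mod_cast hn
  have hm : (0:ℝ) ≤ (m:ℝ) := Nat.cast_nonneg m
  have h1 : (0:ℝ) < 2 * (n : ℝ) + 2 * m - 1 := by nlinarith
  have h2 : (0:ℝ) < 2 * (n : ℝ) + 2 * m + 1 := by nlinarith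
  have h3 : (0:ℝ) < 2 * (n : ℝ) + 2 * m + 3 := by nlinarith
  have h4 : (0:ℝ) < (n : ℝ) + 2 * m := by nlinarith
  have h5 : (0:ℝ) < (n : ℝ) + 2 * m + 1 := by nlinarith
  have hX : (0:ℝ) ≤ (n : ℝ) * ((n : ℝ) + 1) * ((n : ℝ) + 2 * m) * ((n : ℝ) + 2 * m + 1) /
    ((2 * (n : ℝ) + 2 * m - 1) * (2 * (n : ℝ) + 2 * m + 1) ^ 2 * (2 * (n : ℝ) + 2 * m + 3)) := by
    apply div_nonneg
    · positivity
    · exact le_of_lt (mul_pos (mul_pos h1 (pow_pos h2 2)) h3)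
  have harg : (n : ℝ) * ((n : ℝ) + 1) /
      ((2 * (n : ℝ) + 2 * m + 1) * (2 * (n : ℝ) + 2 * m + 3)) =
      (n : ℝ) * ((n : ℝ) + 1) * ((n : ℝ) + 2 * m) * ((n : ℝ) + 2 * m + 1) /
        ((2 * (n : ℝ) + 2 * m - 1) * (2 * (n : ℝ) + 2 * m + 1) ^ 2 * (2 * (n : ℝ) + 2 * m + 3)) /
      (((n : ℝ) + 2 * m) * ((n : ℝ) + 2 * m + 1) /
        ((2 * (n : ℝ) + 2 * m - 1) * (2 * (n : ℝ) + 2 * m + 1))) := by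
    rw [div_div_div_eq]
    rw [div_eq_div_iff (by positivity) (by positivity)]
    ring
  rw [dC, bM, cC, neg_div, ← Real.sqrt_div hX, harg]

lemma part1 (m : ℕ) : (cC m 1) ^ 2 = aM m 1 := by
  rw [cC_sq m 1 le_rfl, aM]
  have hm : (0:ℝ) ≤ (m:ℝ) := Nat.cast_nonneg m
  have h1 : (2 * ((1:ℕ):ℝ) + 2 * m - 1) ≠ 0 := by push_cast; nlinarith
  have h2 : (2 * ((1:ℕ):ℝ) + 2 * m + 1) ≠ 0 := by push_cast; nlinarith
  have h3 : (2 * ((1:ℕ):ℝ) + 2 * m - 3) ≠ 0 := by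
    push_cast; intro h; exact two_m_sub_ne m (by linarith)
  rw [div_eq_div_iff (by push_cast at h1 h2 ⊢; exact mul_ne_zero h1 h2)
    (by push_cast at h3 h2 ⊢; exact mul_ne_zero h3 h2)]
  push_cast
  ring

lemma part2 (m : ℕ) : (cC m 2) ^ 2 = aM m 2 := by
  rw [cC_sq m 2 (by norm_num), aM]
  have hm : (0:ℝ) ≤ (m:ℝ) := Nat.cast_nonneg m
  have h1 : (2 * ((2:ℕ):ℝ) + 2 * m - 1) ≠ 0 := by push_cast; nlinarith
  have h2 : (2 * ((2:ℕ):ℝ) + 2 * m + 1) ≠ 0 := by push_cast; nlinarith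
  have h3 : (2 * ((2:ℕ):ℝ) + 2 * m - 3) ≠ 0 := by push_cast; nlinarith
  rw [div_eq_div_iff (by push_cast at h1 h2 ⊢; exact mul_ne_zero h1 h2)
    (by push_cast at h3 h2 ⊢; exact mul_ne_zero h3 h2)]
  push_cast
  ring

lemma part4 (m n : ℕ) (hn : 3 ≤ n) :
    (cC m n) ^ 2 + (dC m (n - 2)) ^ 2 = aM m n := by
  obtain ⟨k, rfl⟩ : ∃ k, n = k + 3 := ⟨n - 3, by omega⟩
  have h2 : k + 3 - 2 = k + 1 := by omega
  rw [h2, cC_sq m (k+3) (by omega), dC_sq, aM]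
  have hm : (0:ℝ) ≤ (m:ℝ) := Nat.cast_nonneg m
  have hk : (0:ℝ) ≤ (k:ℝ) := Nat.cast_nonneg k
  push_cast
  have d1 : (2 * ((k:ℝ)+3) + 2 * m - 1) ≠ 0 := by nlinarith
  have d2 : (2 * ((k:ℝ)+3) + 2 * m + 1) ≠ 0 := by nlinarith
  have d3 : (2 * ((k:ℝ)+1) + 2 * m + 1) ≠ 0 := by nlinarith
  have d4 : (2 * ((k:ℝ)+1) + 2 * m + 3) ≠ 0 := by nlinarith
  have d5 : (2 * ((k:ℝ)+3) + 2 * m - 3) ≠ 0 := by nlinarith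
  rw [div_add_div _ _ (mul_ne_zero d1 d2) (mul_ne_zero d3 d4),
    div_eq_div_iff (mul_ne_zero (mul_ne_zero d1 d2) (mul_ne_zero d3 d4)) (mul_ne_zero d5 d2)]
  ring

lemma Rchol_zero (m k i : ℕ) (h : ¬(1 ≤ k ∧ (i = k ∨ i = k + 2))) : Rchol m k i = 0 := by
  unfold Rchol
  split_ifs with h1 h2 h3 <;> first | rfl | (exfalso; omega)

lemma Rchol_diag (m k : ℕ) (h : 1 ≤ k) : Rchol m k k = cC m k := by
  simp [Rchol, h]

lemma Rchol_super (m k : ℕ) (h : 1 ≤ k) : Rchol m k (k + 2) = dC m k := by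
  simp [Rchol, h]

lemma part5 (m : ℕ) (i j : ℕ) (hi : 1 ≤ i) (hj : 1 ≤ j) :
    ∑' k, Rchol m k i * Rchol m k j = Mpenta m i j := by
  rcases eq_or_ne j i with rfl | hij
  · -- diagonal case
    have hM : Mpenta m j j = aM m j := by simp [Mpenta, hj]
    rcases lt_or_ge j 3 with h3 | h3
    · rw [tsum_eq_single j ?_]
      · rw [Rchol_diag m j hj, hM, ← sq]
        interval_cases j
        · exact part1 m
        · exact part2 m
      · intro k hk
        rw [Rchol_zero m k j (by omega), zero_mul]
    · obtain ⟨a, rfl⟩ : ∃ a, j = a + 3 := ⟨j - 3, by omega⟩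
      rw [tsum_eq_sum (s := {a + 1, a + 3}) ?_]
      · rw [Finset.sum_pair (by omega)]
        rw [show a + 3 = (a + 1) + 2 from rfl, Rchol_super m (a+1) (by omega),
          Rchol_diag m (a+1+2) (by omega), hM, ← sq, ← sq]
        rw [add_comm]
        have := part4 m (a + 3) (by omega)
        simpa using this
      · intro k hk
        simp only [Finset.mem_insert, Finset.mem_singleton] at hk
        push_neg at hk
        rw [Rchol_zero m k (a+3) (by omega), zero_mul]
  · rcases eq_or_ne j (i + 2) with rfl | hj2
    · have hM : Mpenta m i (i + 2) = bM m i := by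
        simp [Mpenta, hi]
      rw [tsum_eq_single i ?_, Rchol_diag m i hi, Rchol_super m i hi, hM,
        dC_eq m i hi, mul_div_cancel₀ _ (cC_pos m i hi).ne']
      intro k hk
      by_cases hk2 : i = k + 2
      · rw [Rchol_zero m k (i + 2) (by omega), mul_zero]
      · rw [Rchol_zero m k i (by omega), zero_mul]
    · rcases eq_or_ne i (j + 2) with rfl | hi2
      · have hM : Mpenta m (j + 2) j = bM m j := by
          simp [Mpenta, hj]
          intro h
          exact absurd h (by omega)
        rw [tsum_eq_single j ?_, Rchol_super m j hj, Rchol_diag m j hj, hM,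
          dC_eq m j hj, div_mul_cancel₀ _ (cC_pos m j hj).ne']
        intro k hk
        by_cases hk2 : j = k + 2
        · rw [Rchol_zero m k (j + 2) (by omega), zero_mul]
        · rw [Rchol_zero m k j (by omega), mul_zero]
      · have hM : Mpenta m i j = 0 := by
          simp [Mpenta, hi, hj, Ne.symm hij, hj2, hi2]
        rw [hM]
        have h0 : ∀ k, Rchol m k i * Rchol m k j = 0 := by
          intro k
          by_cases hki : k = i ∨ i = k + 2
          · rw [Rchol_zero m k j (by omega), mul_zero]
          · rw [Rchol_zero m k i (by omega), zero_mul]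
        rw [tsum_congr h0, tsum_zero]

/-- the Cholesky recurrences hold, so `R` is the Cholesky factor of the
multiplication-by-`(1-x²)` operator: `Rᵀ R = M`. -/
theorem cholesky_factor_of_M (m : ℕ) :
    (cC m 1) ^ 2 = aM m 1 ∧
    (cC m 2) ^ 2 = aM m 2 ∧
    (∀ n, 1 ≤ n → dC m n = bM m n / cC m n) ∧
    (∀ n, 3 ≤ n → (cC m n) ^ 2 + (dC m (n - 2)) ^ 2 = aM m n) ∧
    (∀ i j, 1 ≤ i → 1 ≤ j → ∑' k, Rchol m k i * Rchol m k j = Mpenta m i j) :=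
  ⟨part1 m, part2 m, fun n hn => dC_eq m n hn, fun n hn => part4 m n hn,
    fun i j hi hj => part5 m i j hi hj⟩
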